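/- Let Ḡ be an orientation of a finite undirected simple graph G=(V,E) satisfying Invariant 1, let {u,v} ∉ E with odeg(u,Ḡ) ≤ odeg(v,Ḡ), let G̃ be the orientation of G + {u,v} obtained from Ḡ by adding the directed edge (u,v), and let P be an improving path in G̃ starting at u. Then the orientation Ḡ' obtained from G̃ by flipping P contains no improving path; that is, Ḡ' satisfies Invariant 1. -/

import Mathlib

open Finset

/-- An orientation of a simple graph `G`: a choice, for each edge `{u,v}` of `G`,
of exactly one of the directed edges `(u,v)`, `(v,u)`. -/
structure GraphOrientation {V : Type*} (G : SimpleGraph V) where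
  dir : V → V → Bool
  dir_adj : ∀ u v, dir u v = true → G.Adj u v
  exactly_one : ∀ u v, G.Adj u v → (dir u v = true ↔ ¬ dir v u = true)

/-- Out-degree of `v` w.r.t. a directed-edge relation `d`. -/
def outDegF {V : Type*} [Fintype V] (d : V → V → Bool) (v : V) : ℕ :=
  (Finset.univ.filter fun w => d v w = true).card

/-- Out-degree of a vertex in an orientation. -/
def GraphOrientation.outDeg {V : Type*} [Fintype V] {G : SimpleGraph V}
    (o : GraphOrientation G) (v : V) : ℕ := outDegF o.dir v

/-- Maximum out-degree `Δ` of an orientation. -/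
def GraphOrientation.maxOutDeg {V : Type*} [Fintype V] {G : SimpleGraph V}
    (o : GraphOrientation G) : ℕ := Finset.univ.sup o.outDeg

/-- `|E(S)|`: the number of edges of `G` with both endpoints in `S`. -/
def edgeCount {V : Type*} [Fintype V] [DecidableEq V] (G : SimpleGraph V)
    [DecidableRel G.Adj] (S : Finset V) : ℕ :=
  (G.edgeFinset.filter fun e => ∀ x ∈ e, x ∈ S).card

/-- A directed path in an orientation: a list of distinct vertices, of length at
least two (i.e. `k ≥ 1` edges), with consecutive vertices joined by directed edges. -/
def IsDirPath {V : Type*} {G : SimpleGraph V} (o : GraphOrientation G) (p : List V) : Prop :=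
  p.Nodup ∧ 2 ≤ p.length ∧ List.Chain' (fun a b => o.dir a b = true) p

/-- A directed path from `a` to `b`. -/
def IsPathFrom {V : Type*} {G : SimpleGraph V} (o : GraphOrientation G)
    (p : List V) (a b : V) : Prop :=
  IsDirPath o p ∧ p.head? = some a ∧ p.getLast? = some b

/-- Invariant 1: there is no improving path between any two vertices, i.e. no directed
path `⟨a,…,b⟩` with `odeg(a) > odeg(b) + 1`. -/
def Invariant1 {V : Type*} [Fintype V] {G : SimpleGraph V} (o : GraphOrientation G) : Prop :=
  ∀ p a b, IsPathFrom o p a b → o.outDeg a ≤ o.outDeg b + 1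

/-- Invariant 2: there is no improving path starting at a vertex of maximum out-degree. -/
def Invariant2 {V : Type*} [Fintype V] {G : SimpleGraph V} (o : GraphOrientation G) : Prop :=
  ∀ p a b, IsPathFrom o p a b → o.outDeg a = o.maxOutDeg → o.outDeg a ≤ o.outDeg b + 1

/-- Flipping the directed path `p`: every directed edge `(v_i, v_{i+1})` of `p`
is replaced by the reversed edge `(v_{i+1}, v_i)`; all other edges are unchanged. -/
def flipDir {V : Type*} [DecidableEq V] (d : V → V → Bool) (p : List V) : V → V → Bool :=
  fun a b => if (a, b) ∈ p.zip p.tail ∨ (b, a) ∈ p.zip p.tail then d b a else d a b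

/-- `G + {u,v}`: the graph obtained from `G` by inserting the edge `{u,v}`. -/
def addE {V : Type*} (G : SimpleGraph V) (u v : V) : SimpleGraph V :=
  G ⊔ SimpleGraph.fromEdgeSet {s(u, v)}

/-- `G − {u,v}`: the graph obtained from `G` by deleting the edge `{u,v}`. -/
def delE {V : Type*} (G : SimpleGraph V) (u v : V) : SimpleGraph V :=
  G.deleteEdges {s(u, v)}


section ZipAux
variable {V : Type*}

theorem aux_zip_cons {a b : V} {t : List V} :
    ((a :: b :: t).zip (a :: b :: t).tail) = (a, b) :: ((b :: t).zip (b :: t).tail) := rfl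

theorem aux_zip_mem_left {l : List V} {x y : V} (h : (x, y) ∈ l.zip l.tail) : x ∈ l :=
  (List.of_mem_zip h).1

theorem aux_zip_mem_right {l : List V} {x y : V} (h : (x, y) ∈ l.zip l.tail) : y ∈ l.tail :=
  (List.of_mem_zip h).2

theorem aux_chain_of_zip {D : V → V → Bool} :
    ∀ {l : List V}, List.Chain' (fun a b => D a b = true) l →
      ∀ {x y : V}, (x, y) ∈ l.zip l.tail → D x y = true := by
  intro l
  induction l with
  | nil => intro _ x y h; simp at h
  | cons a t ih =>
    intro hc x y h
    cases t with
    | nil => simp at h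
    | cons b t' =>
      rw [aux_zip_cons] at h
      rcases List.mem_cons.mp h with h1 | h2
      · simp only [Prod.mk.injEq] at h1
        obtain ⟨rfl, rfl⟩ := h1
        exact (List.isChain_cons_cons.mp hc).1
      · exact ih (List.isChain_cons_cons.mp hc).2 h2

theorem aux_succ_unique {l : List V} (hnd : l.Nodup) :
    ∀ {x y₁ y₂ : V}, (x, y₁) ∈ l.zip l.tail → (x, y₂) ∈ l.zip l.tail → y₁ = y₂ := by
  induction l with
  | nil => intro x y₁ y₂ h; simp at h
  | cons a t ih =>
    intro x y₁ y₂ h1 h2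
    cases t with
    | nil => simp at h1
    | cons b t' =>
      rw [aux_zip_cons] at h1 h2
      have hna : a ∉ b :: t' := (List.nodup_cons.mp hnd).1
      rcases List.mem_cons.mp h1 with e1 | m1 <;> rcases List.mem_cons.mp h2 with e2 | m2
      · simp only [Prod.mk.injEq] at e1 e2
        rw [e1.2, e2.2]
      · simp only [Prod.mk.injEq] at e1
        exact absurd (e1.1 ▸ aux_zip_mem_left m2) hna
      · simp only [Prod.mk.injEq] at e2
        exact absurd (e2.1 ▸ aux_zip_mem_left m1) hna
      · exact ih (List.nodup_cons.mp hnd).2 m1 m2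

theorem aux_pred_unique {l : List V} (hnd : l.Nodup) :
    ∀ {x y₁ y₂ : V}, (y₁, x) ∈ l.zip l.tail → (y₂, x) ∈ l.zip l.tail → y₁ = y₂ := by
  induction l with
  | nil => intro x y₁ y₂ h; simp at h
  | cons a t ih =>
    intro x y₁ y₂ h1 h2
    cases t with
    | nil => simp at h1
    | cons b t' =>
      rw [aux_zip_cons] at h1 h2
      have hnb : b ∉ t' := (List.nodup_cons.mp (List.nodup_cons.mp hnd).2).1
      rcases List.mem_cons.mp h1 with e1 | m1 <;> rcases List.mem_cons.mp h2 with e2 | m2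
      · simp only [Prod.mk.injEq] at e1 e2
        rw [e1.1, e2.1]
      · simp only [Prod.mk.injEq] at e1
        have := aux_zip_mem_right m2
        rw [e1.2] at this
        simp only [List.tail_cons] at this
        exact absurd this hnb
      · simp only [Prod.mk.injEq] at e2
        have := aux_zip_mem_right m1
        rw [e2.2] at this
        simp only [List.tail_cons] at this
        exact absurd this hnb
      · exact ih (List.nodup_cons.mp hnd).2 m1 m2

theorem aux_no_pred_head {l : List V} (hnd : l.Nodup) {y h : V} (hh : l.head? = some h)
    (hmem : (y, h) ∈ l.zip l.tail) : False := by
  cases l with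
  | nil => simp at hmem
  | cons a t =>
    have : a = h := by simpa using hh
    subst this
    exact (List.nodup_cons.mp hnd).1 (aux_zip_mem_right hmem)

theorem aux_no_succ_last {l : List V} :
    l.Nodup → ∀ {y b : V}, l.getLast? = some b → (b, y) ∈ l.zip l.tail → False := by
  induction l with
  | nil => intro _ y b _ hmem; simp at hmem
  | cons a t ih =>
    intro hnd y b hb hmem
    cases t with
    | nil => simp at hmem
    | cons c t' =>
      rw [aux_zip_cons] at hmem
      rw [List.getLast?_cons_cons] at hb
      rcases List.mem_cons.mp hmem with e | m
      · simp only [Prod.mk.injEq] at e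
        have hbmem : b ∈ c :: t' := List.mem_of_mem_getLast? (Option.mem_def.mpr hb)
        exact (List.nodup_cons.mp hnd).1 (e.1 ▸ hbmem)
      · exact ih (List.nodup_cons.mp hnd).2 hb m

theorem aux_no_rev {l : List V} :
    l.Nodup → ∀ {x y : V}, (x, y) ∈ l.zip l.tail → (y, x) ∈ l.zip l.tail → False := by
  induction l with
  | nil => intro _ x y h; simp at h
  | cons a t ih =>
    intro hnd x y h1 h2
    cases t with
    | nil => simp at h1
    | cons b t' =>
      rw [aux_zip_cons] at h1 h2
      have hna : a ∉ b :: t' := (List.nodup_cons.mp hnd).1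
      rcases List.mem_cons.mp h1 with e1 | m1 <;> rcases List.mem_cons.mp h2 with e2 | m2
      · simp only [Prod.mk.injEq] at e1 e2
        have hab : a = b := e2.1.symm.trans e1.2
        exact hna (hab ▸ (List.mem_cons_self (a := b) (l := t')))
      · simp only [Prod.mk.injEq] at e1
        have hx' : x ∈ t' := by simpa using aux_zip_mem_right m2
        exact hna (e1.1 ▸ List.mem_cons_of_mem _ hx')
      · simp only [Prod.mk.injEq] at e2
        have hy' : y ∈ t' := by simpa using aux_zip_mem_right m1
        exact hna (e2.1 ▸ List.mem_cons_of_mem _ hy')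
      · exact ih (List.nodup_cons.mp hnd).2 m1 m2

theorem aux_succ_exists :
    ∀ {l : List V} {x b : V}, x ∈ l → l.getLast? = some b → x ≠ b →
      ∃ y, (x, y) ∈ l.zip l.tail := by
  intro l
  induction l with
  | nil => intro x b h; simp at h
  | cons a t ih =>
    intro x b hx hb hne
    cases t with
    | nil =>
      have h1 : x = a := by simpa using hx
      have h2 : a = b := by simpa using hb
      exact absurd (h1.trans h2) hne
    | cons c t' =>
      rw [List.getLast?_cons_cons] at hb
      rcases List.mem_cons.mp hx with rfl | hx'
      · exact ⟨c, by rw [aux_zip_cons]; exact List.mem_cons_self⟩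
      · obtain ⟨y, hy⟩ := ih hx' hb hne
        exact ⟨y, by rw [aux_zip_cons]; exact List.mem_cons_of_mem _ hy⟩

theorem aux_pred_exists :
    ∀ {l : List V} {x : V}, x ∈ l.tail → ∃ y, (y, x) ∈ l.zip l.tail := by
  intro l
  induction l with
  | nil => intro x h; simp at h
  | cons a t ih =>
    intro x hx
    simp only [List.tail_cons] at hx
    cases t with
    | nil => simp at hx
    | cons c t' =>
      rcases List.mem_cons.mp hx with rfl | hx'
      · exact ⟨a, by rw [aux_zip_cons]; exact List.mem_cons_self⟩
      · obtain ⟨y, hy⟩ := ih (by simpa using hx')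
        exact ⟨y, by rw [aux_zip_cons]; exact List.mem_cons_of_mem _ hy⟩

end ZipAux
section WalkAux
variable {V : Type*}

theorem aux_chain_rtg_head {D : V → V → Bool} :
    ∀ {l : List V}, List.Chain' (fun a b => D a b = true) l →
      ∀ {h x : V}, l.head? = some h → x ∈ l →
        Relation.ReflTransGen (fun a b => D a b = true) h x := by
  intro l
  induction l with
  | nil => intro _ h x _ hx; simp at hx
  | cons a t ih =>
    intro hc h x hh hx
    have ha : a = h := by simpa using hh
    subst ha
    rcases List.mem_cons.mp hx with rfl | hx'
    · exact Relation.ReflTransGen.refl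
    · cases t with
      | nil => simp at hx'
      | cons c t' =>
        exact Relation.ReflTransGen.head (List.isChain_cons_cons.mp hc).1
          (ih (List.isChain_cons_cons.mp hc).2 rfl hx')

theorem aux_getLast?_cons_ne {a : V} {t : List V} (h : t ≠ []) :
    (a :: t).getLast? = t.getLast? := by
  cases t with
  | nil => exact absurd rfl h
  | cons c t' => exact List.getLast?_cons_cons

theorem aux_getLast?_append_ne {s t : List V} (h : t ≠ []) :
    (s ++ t).getLast? = t.getLast? := by
  rw [List.getLast?_append]
  cases ht : t.getLast? with
  | none => exact absurd (List.getLast?_eq_none_iff.mp ht) h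
  | some z => rfl

theorem aux_chain_rtg_last {D : V → V → Bool} {l : List V}
    (hc : List.Chain' (fun a b => D a b = true) l) {x b : V} (hx : x ∈ l)
    (hb : l.getLast? = some b) :
    Relation.ReflTransGen (fun a b => D a b = true) x b := by
  obtain ⟨s, t, rfl⟩ := List.append_of_mem hx
  have hc2 : List.Chain' (fun a b => D a b = true) (x :: t) :=
    (List.isChain_append.mp hc).2.1
  have hb2 : (x :: t).getLast? = some b := by
    rw [aux_getLast?_append_ne (by simp : x :: t ≠ [])] at hb
    exact hb
  exact aux_chain_rtg_head hc2 rfl (List.mem_of_mem_getLast? (Option.mem_def.mpr hb2))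

theorem aux_rtg_chain {D : V → V → Bool} {a b : V}
    (h : Relation.ReflTransGen (fun x y => D x y = true) a b) :
    ∃ l : List V, l ≠ [] ∧ List.Chain' (fun x y => D x y = true) l ∧
      l.head? = some a ∧ l.getLast? = some b := by
  induction h with
  | refl => exact ⟨[a], by simp, List.isChain_singleton _, rfl, rfl⟩
  | @tail m c h1 h2 ih =>
    obtain ⟨l, hne, hc, hh, hl⟩ := ih
    refine ⟨l ++ [c], by simp, ?_, ?_, List.getLast?_concat (l := l)⟩
    · rw [List.Chain', List.isChain_append]
      refine ⟨hc, by simp, ?_⟩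
      intro x hx y hy
      have hx' : m = x := by rw [hl] at hx; simpa using hx
      have hy' : c = y := by simpa using hy
      rw [← hx', ← hy']
      exact h2
    · rw [List.head?_append, hh]; rfl

theorem aux_loop_erase {D : V → V → Bool} :
    ∀ (n : ℕ) (l : List V), l.length ≤ n → l ≠ [] →
      List.Chain' (fun x y => D x y = true) l →
      ∃ q : List V, q.Nodup ∧ q ≠ [] ∧ List.Chain' (fun x y => D x y = true) q ∧
        q.head? = l.head? ∧ q.getLast? = l.getLast? ∧ ∀ x ∈ q, x ∈ l := by
  intro n
  induction n with
  | zero =>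
    intro l hl hne
    cases l with
    | nil => exact absurd rfl hne
    | cons a t => simp at hl
  | succ n ih =>
    intro l hl hne hc
    cases l with
    | nil => exact absurd rfl hne
    | cons a t =>
      by_cases ha : a ∈ t
      · obtain ⟨t1, t2, rfl⟩ := List.append_of_mem ha
        have hc2 : List.Chain' (fun x y => D x y = true) (a :: t2) :=
          (List.isChain_append.mp hc.tail).2.1
        have hlen : (a :: t2).length ≤ n := by
          simp only [List.length_cons, List.length_append] at hl ⊢
          omega
        obtain ⟨q, h1, h2, h3, h4, h5, h6⟩ := ih (a :: t2) hlen (by simp) hc2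
        refine ⟨q, h1, h2, h3, ?_, ?_, ?_⟩
        · rw [h4]; rfl
        · rw [h5]
          have e1 : a :: (t1 ++ a :: t2) = (a :: t1) ++ (a :: t2) := by simp
          rw [e1, aux_getLast?_append_ne (by simp : a :: t2 ≠ [])]
        · intro x hx
          have := h6 x hx
          rcases List.mem_cons.mp this with rfl | hx'
          · exact List.mem_cons_self
          · exact List.mem_cons_of_mem _ (by simp [hx'])
      · cases t with
        | nil =>
          exact ⟨[a], by simp, by simp, List.isChain_singleton _, rfl, rfl, by simp⟩
        | cons c t' =>
          have hlen : (c :: t').length ≤ n := by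
            simp only [List.length_cons] at hl ⊢; omega
          obtain ⟨q, h1, h2, h3, h4, h5, h6⟩ :=
            ih (c :: t') hlen (by simp) (List.isChain_cons_cons.mp hc).2
          refine ⟨a :: q, ?_, by simp, ?_, rfl, ?_, ?_⟩
          · exact List.nodup_cons.mpr ⟨fun hm => ha (h6 a hm), h1⟩
          · rw [List.Chain', List.isChain_cons]
            refine ⟨?_, h3⟩
            intro y hy
            have : q.head? = some c := by rw [h4]; rfl
            rw [this] at hy
            have : c = y := by simpa using hy
            rw [← this]
            exact (List.isChain_cons_cons.mp hc).1
          · rw [aux_getLast?_cons_ne h2, h5, List.getLast?_cons_cons]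
          · intro x hx
            rcases List.mem_cons.mp hx with rfl | hx'
            · exact List.mem_cons_self
            · exact List.mem_cons_of_mem _ (h6 x hx')

theorem aux_head_ne_last {l : List V} (hnd : l.Nodup) (hlen : 2 ≤ l.length) {a b : V}
    (hh : l.head? = some a) (hl : l.getLast? = some b) : a ≠ b := by
  cases l with
  | nil => simp at hh
  | cons x t =>
    cases t with
    | nil => simp at hlen
    | cons y t' =>
      have hx : x = a := by simpa using hh
      subst hx
      rw [List.getLast?_cons_cons] at hl
      have hb : b ∈ y :: t' := List.mem_of_mem_getLast? (Option.mem_def.mpr hl)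
      intro e
      exact (List.nodup_cons.mp hnd).1 (e ▸ hb)

end WalkAux
section ScanAux
variable {V : Type*}

theorem aux_scan1 {D' D0 : V → V → Bool} :
    ∀ {l : List V} {a b : V}, List.Chain' (fun x y => D' x y = true) l →
      l.head? = some a → l.getLast? = some b →
      Relation.ReflTransGen (fun x y => D0 x y = true) a b ∨
      ∃ x y, (D' x y = true ∧ D0 x y ≠ true) ∧
        Relation.ReflTransGen (fun x y => D0 x y = true) a x := by
  intro l
  induction l with
  | nil => intro a b _ hh; simp at hh
  | cons p t ih =>
    intro a b hc hh hl
    have hp : p = a := by simpa using hh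
    subst hp
    cases t with
    | nil =>
      left
      have : p = b := by simpa using hl
      rw [this]
    | cons q t' =>
      have hedge : D' p q = true := (List.isChain_cons_cons.mp hc).1
      by_cases h0 : D0 p q = true
      · rcases ih (List.isChain_cons_cons.mp hc).2 rfl (List.getLast?_cons_cons ▸ hl) with
          h | ⟨x, y, hsp, hrw⟩
        · exact Or.inl (Relation.ReflTransGen.head h0 h)
        · exact Or.inr ⟨x, y, hsp, Relation.ReflTransGen.head h0 hrw⟩
      · exact Or.inr ⟨p, q, ⟨hedge, h0⟩, Relation.ReflTransGen.refl⟩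

theorem aux_scan2 {D' D0 : V → V → Bool} :
    ∀ {l : List V} {a b : V}, List.Chain' (fun x y => D' x y = true) l →
      l.head? = some a → l.getLast? = some b →
      Relation.ReflTransGen (fun x y => D0 x y = true) a b ∨
      ∃ x y, (D' x y = true ∧ D0 x y ≠ true) ∧
        Relation.ReflTransGen (fun x y => D0 x y = true) y b := by
  intro l
  induction l with
  | nil => intro a b _ hh; simp at hh
  | cons p t ih =>
    intro a b hc hh hl
    have hp : p = a := by simpa using hh
    subst hp
    cases t with
    | nil =>
      left
      have : p = b := by simpa using hl
      rw [this]
    | cons q t' =>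
      have hedge : D' p q = true := (List.isChain_cons_cons.mp hc).1
      rcases ih (List.isChain_cons_cons.mp hc).2 rfl (List.getLast?_cons_cons ▸ hl) with
        h | ⟨x, y, hsp, hrw⟩
      · by_cases h0 : D0 p q = true
        · exact Or.inl (Relation.ReflTransGen.head h0 h)
        · exact Or.inr ⟨p, q, ⟨hedge, h0⟩, h⟩
      · exact Or.inr ⟨x, y, hsp, hrw⟩

end ScanAux

theorem aux_key {V : Type*} [Fintype V] {G : SimpleGraph V} (o : GraphOrientation G)
    (hinv : Invariant1 o) {a b : V}
    (h : Relation.ReflTransGen (fun x y => o.dir x y = true) a b) (hne : a ≠ b) :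
    o.outDeg a ≤ o.outDeg b + 1 := by
  obtain ⟨l, hlne, hc, hh, hl⟩ := aux_rtg_chain h
  obtain ⟨q, h1, h2, h3, h4, h5, _⟩ := aux_loop_erase l.length l le_rfl hlne hc
  have hh' : q.head? = some a := h4.trans hh
  have hl' : q.getLast? = some b := h5.trans hl
  have hlen : 2 ≤ q.length := by
    cases q with
    | nil => exact absurd rfl h2
    | cons x t =>
      cases t with
      | nil =>
        have e1 : x = a := by simpa using hh'
        have e2 : x = b := by simpa using hl'
        exact absurd (e1.symm.trans e2) hne
      | cons y t' => simp
  exact hinv q a b ⟨⟨h1, hlen, h3⟩, hh', hl'⟩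

/-- After inserting `{u,v}` (directed `(u,v)`) into an Invariant-1
orientation and flipping an improving path `P` starting at `u`, the resulting
orientation `Ḡ'` contains no improving path, i.e. satisfies Invariant 1. -/
theorem insert_flip_invariant1 {V : Type*} [Fintype V] [DecidableEq V]
    {G : SimpleGraph V} (o : GraphOrientation G) (hinv : Invariant1 o)
    (u v : V) (hne : u ≠ v) (hE : ¬ G.Adj u v) (hdeg : o.outDeg u ≤ o.outDeg v)
    (ot : GraphOrientation (addE G u v))
    (hot : ∀ a b, ot.dir a b = true ↔ (o.dir a b = true ∨ (a = u ∧ b = v)))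
    (P : List V) (w : V) (hP : IsPathFrom ot P u w)
    (himp : ot.outDeg w + 1 < ot.outDeg u)
    (o' : GraphOrientation (addE G u v)) (ho' : o'.dir = flipDir ot.dir P) :
    Invariant1 o' := by
  classical
  obtain ⟨⟨hPnd, hPlen, hPch⟩, hPh, hPl⟩ := hP
  cases P with
  | nil => simp at hPh
  | cons p0 T =>
  have hp0 : u = p0 := Eq.symm (by simpa using hPh)
  subst hp0
  cases T with
  | nil => simp at hPlen
  | cons c T' =>
  have hlastT : (c :: T').getLast? = some w := by rwa [List.getLast?_cons_cons] at hPl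
  have hwT : w ∈ c :: T' := List.mem_of_mem_getLast? (Option.mem_def.mpr hlastT)
  have huT : u ∉ c :: T' := (List.nodup_cons.mp hPnd).1
  have hwu : w ≠ u := fun e => huT (e ▸ hwT)
  have hxo : ∀ x y, ot.dir x y = true → ¬ ot.dir y x = true :=
    fun x y h => (ot.exactly_one x y (ot.dir_adj x y h)).mp h
  have hov : ¬ o.dir u v = true := fun h => hE (o.dir_adj u v h)
  have hchT : List.Chain' (fun x y => ot.dir x y = true) (c :: T') := hPch.tail
  have transfer : ∀ l : List V, (∀ x ∈ l, x ≠ u) →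
      List.Chain' (fun x y => ot.dir x y = true) l →
      List.Chain' (fun x y => o.dir x y = true) l := by
    intro l
    induction l with
    | nil => intro _ _; exact List.isChain_nil
    | cons a t ih =>
      intro hmem hc
      rw [List.Chain', List.isChain_cons] at hc ⊢
      refine ⟨?_, ih (fun x hx => hmem x (List.mem_cons_of_mem _ hx)) hc.2⟩
      intro y hy
      rcases (hot a y).mp (hc.1 y hy) with h | ⟨ha, _⟩
      · exact h
      · exact absurd ha (hmem a (List.mem_cons_self))
  have hchT0 : List.Chain' (fun x y => o.dir x y = true) (c :: T') :=
    transfer _ (fun x hx e => huT (e ▸ hx)) hchT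
  have F3 : ∀ x ∈ c :: T', Relation.ReflTransGen (fun a b => o.dir a b = true) x w :=
    fun x hx => aux_chain_rtg_last hchT0 hx hlastT
  have hotuc : ot.dir u c = true := (List.isChain_cons_cons.mp hPch).1
  have hcase : o.dir u c = true ∨ c = v := by
    rcases (hot u c).mp hotuc with h | ⟨_, h⟩
    · exact Or.inl h
    · exact Or.inr h
  have hd_ot_eq : ∀ x, x ≠ u → ot.outDeg x = o.outDeg x := by
    intro x hx
    unfold GraphOrientation.outDeg outDegF
    congr 1
    apply Finset.filter_congr
    intro y _
    rw [hot]
    simp [hx]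
  have hd_ot_u : ot.outDeg u = o.outDeg u + 1 := by
    unfold GraphOrientation.outDeg outDegF
    have he : (Finset.univ.filter fun y => ot.dir u y = true) =
        insert v (Finset.univ.filter fun y => o.dir u y = true) := by
      ext y
      simp only [Finset.mem_filter, Finset.mem_insert, Finset.mem_univ, true_and, hot u y]
      tauto
    rw [he, Finset.card_insert_of_notMem (by simp [hov])]
  have hk1 : o.outDeg w + 1 ≤ o.outDeg u := by
    rw [hd_ot_eq w hwu, hd_ot_u] at himp; omega
  have Wup : ∀ x, Relation.ReflTransGen (fun a b => o.dir a b = true) x w →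
      o.outDeg x ≤ o.outDeg w + 1 := by
    intro x hx
    by_cases hxw : x = w
    · rw [hxw]; omega
    · exact aux_key o hinv hx hxw
  have hRuw : c ≠ v → Relation.ReflTransGen (fun a b => o.dir a b = true) u w := by
    intro hcv
    rcases hcase with h | h
    · exact Relation.ReflTransGen.head h (F3 c (List.mem_cons_self))
    · exact absurd h hcv
  have hku : o.outDeg u = o.outDeg w + 1 := by
    by_cases hcv : c = v
    · have h1 : Relation.ReflTransGen (fun a b => o.dir a b = true) v w :=
        hcv ▸ F3 c (List.mem_cons_self)
      have h2 := Wup v h1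
      omega
    · have h2 := Wup u (hRuw hcv); omega
  have hkv : o.outDeg w + 1 ≤ o.outDeg v := by omega
  have Rkd : ∀ x, (∃ s, o.outDeg w + 1 ≤ o.outDeg s ∧
      Relation.ReflTransGen (fun a b => o.dir a b = true) s x) →
      o.outDeg w ≤ o.outDeg x := by
    rintro x ⟨s, hs, hrw⟩
    by_cases hsx : s = x
    · rw [hsx] at hs; omega
    · have := aux_key o hinv hrw hsx; omega
  have RkP : ∀ x ∈ u :: c :: T', ∃ s, o.outDeg w + 1 ≤ o.outDeg s ∧
      Relation.ReflTransGen (fun a b => o.dir a b = true) s x := by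
    intro x hx
    rcases List.mem_cons.mp hx with rfl | hx'
    · exact ⟨x, le_of_eq hku.symm, Relation.ReflTransGen.refl⟩
    · by_cases hcv : c = v
      · exact ⟨c, by rw [hcv]; exact hkv, aux_chain_rtg_head hchT0 rfl hx'⟩
      · rcases hcase with h | h
        · exact ⟨u, le_of_eq hku.symm,
            Relation.ReflTransGen.head h (aux_chain_rtg_head hchT0 rfl hx')⟩
        · exact absurd h hcv
  have pair0 : (u, c) ∈ (u :: c :: T').zip (u :: c :: T').tail := by
    rw [aux_zip_cons]; exact List.mem_cons_self
  have ho'd : ∀ x y, o'.dir x y =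
      (if (x, y) ∈ (u :: c :: T').zip (u :: c :: T').tail ∨
          (y, x) ∈ (u :: c :: T').zip (u :: c :: T').tail then ot.dir y x else ot.dir x y) := by
    intro x y; rw [ho']; rfl
  have hfilter_u : (Finset.univ.filter fun y => o'.dir u y = true) =
      (Finset.univ.filter fun y => ot.dir u y = true).erase c := by
    ext y
    simp only [Finset.mem_filter, Finset.mem_erase, Finset.mem_univ, true_and]
    rw [ho'd]
    by_cases hy : y = c
    · subst hy
      rw [if_pos (Or.inl pair0)]
      constructor
      · intro h; exact absurd h (hxo u y hotuc)
      · rintro ⟨hne', _⟩; exact absurd rfl hne'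
    · have h1 : (u, y) ∉ (u :: c :: T').zip (u :: c :: T').tail :=
        fun hm => hy (aux_succ_unique hPnd hm pair0)
      have h2 : (y, u) ∉ (u :: c :: T').zip (u :: c :: T').tail :=
        fun hm => aux_no_pred_head hPnd rfl hm
      rw [if_neg (by tauto)]
      exact ⟨fun h => ⟨hy, h⟩, fun h => h.2⟩
  have d'_u : o'.outDeg u + 1 = ot.outDeg u := by
    unfold GraphOrientation.outDeg outDegF
    rw [hfilter_u]
    exact Finset.card_erase_add_one
      (by simp only [Finset.mem_filter, Finset.mem_univ, true_and]; exact hotuc)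
  obtain ⟨q₀, hq₀⟩ := aux_pred_exists (l := u :: c :: T') (show w ∈ (u :: c :: T').tail from hwT)
  have hq₀w : ot.dir q₀ w = true := aux_chain_of_zip hPch hq₀
  have hfilter_w : (Finset.univ.filter fun y => o'.dir w y = true) =
      insert q₀ (Finset.univ.filter fun y => ot.dir w y = true) := by
    ext y
    simp only [Finset.mem_filter, Finset.mem_insert, Finset.mem_univ, true_and]
    rw [ho'd]
    by_cases hy : y = q₀
    · subst hy
      rw [if_pos (Or.inr hq₀)]
      simp [hq₀w]
    · have h1 : (w, y) ∉ (u :: c :: T').zip (u :: c :: T').tail :=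
        fun hm => aux_no_succ_last hPnd hPl hm
      have h2 : (y, w) ∉ (u :: c :: T').zip (u :: c :: T').tail :=
        fun hm => hy (aux_pred_unique hPnd hm hq₀)
      rw [if_neg (by tauto)]
      exact ⟨fun h => Or.inr h, fun h => h.resolve_left hy⟩
  have d'_w : o'.outDeg w = ot.outDeg w + 1 := by
    unfold GraphOrientation.outDeg outDegF
    rw [hfilter_w, Finset.card_insert_of_notMem
      (by simp only [Finset.mem_filter, Finset.mem_univ, true_and]; exact hxo q₀ w hq₀w)]
  have d'_mid : ∀ x, x ∈ c :: T' → x ≠ w → o'.outDeg x = ot.outDeg x := by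
    intro x hxT hxw
    obtain ⟨s₀, hs₀⟩ := aux_succ_exists (List.mem_cons_of_mem u hxT) hPl hxw
    obtain ⟨p₀, hp₀⟩ := aux_pred_exists (l := u :: c :: T')
      (show x ∈ (u :: c :: T').tail from hxT)
    have hxs : ot.dir x s₀ = true := aux_chain_of_zip hPch hs₀
    have hpx : ot.dir p₀ x = true := aux_chain_of_zip hPch hp₀
    have hfilter : (Finset.univ.filter fun y => o'.dir x y = true) =
        insert p₀ ((Finset.univ.filter fun y => ot.dir x y = true).erase s₀) := by
      ext y
      simp only [Finset.mem_filter, Finset.mem_insert, Finset.mem_erase, Finset.mem_univ,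
        true_and]
      rw [ho'd]
      by_cases h1 : y = p₀
      · subst h1
        rw [if_pos (Or.inr hp₀)]
        simp [hpx]
      · by_cases h2 : y = s₀
        · subst h2
          rw [if_pos (Or.inl hs₀)]
          constructor
          · intro h; exact absurd h (hxo x y hxs)
          · rintro (h | ⟨hne2, _⟩)
            · exact absurd h h1
            · exact absurd rfl hne2
        · have m1 : (x, y) ∉ (u :: c :: T').zip (u :: c :: T').tail :=
            fun hm => h2 (aux_succ_unique hPnd hm hs₀)
          have m2 : (y, x) ∉ (u :: c :: T').zip (u :: c :: T').tail :=
            fun hm => h1 (aux_pred_unique hPnd hm hp₀)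
          rw [if_neg (by tauto)]
          constructor
          · intro h; exact Or.inr ⟨h2, h⟩
          · rintro (h | ⟨_, h⟩)
            · exact absurd h h1
            · exact h
    unfold GraphOrientation.outDeg outDegF
    have hmem_s : s₀ ∈ Finset.univ.filter fun y => ot.dir x y = true := by
      simp only [Finset.mem_filter, Finset.mem_univ, true_and]; exact hxs
    have hnm : p₀ ∉ (Finset.univ.filter fun y => ot.dir x y = true).erase s₀ := by
      simp only [Finset.mem_erase, Finset.mem_filter, Finset.mem_univ, true_and]
      rintro ⟨_, h⟩
      exact hxo p₀ x hpx h
    rw [hfilter, Finset.card_insert_of_notMem hnm]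
    exact Finset.card_erase_add_one hmem_s
  have d'_out : ∀ x, x ∉ u :: c :: T' → o'.outDeg x = ot.outDeg x := by
    intro x hx
    unfold GraphOrientation.outDeg outDegF
    congr 1
    apply Finset.filter_congr
    intro y _
    rw [ho'd]
    have m1 : (x, y) ∉ (u :: c :: T').zip (u :: c :: T').tail :=
      fun hm => hx (aux_zip_mem_left hm)
    have m2 : (y, x) ∉ (u :: c :: T').zip (u :: c :: T').tail :=
      fun hm => hx (List.mem_cons_of_mem _ (aux_zip_mem_right hm))
    rw [if_neg (by tauto)]
  have dd : ∀ x, x ≠ w → o'.outDeg x = o.outDeg x := by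
    intro x hxw
    by_cases hxu : x = u
    · subst hxu
      omega
    · by_cases hxT : x ∈ c :: T'
      · rw [d'_mid x hxT hxw, hd_ot_eq x hxu]
      · have hxP : x ∉ u :: c :: T' := by
          intro hm
          rcases List.mem_cons.mp hm with h | h
          · exact hxu h
          · exact hxT h
        rw [d'_out x hxP, hd_ot_eq x hxu]
  have dW : o'.outDeg w = o.outDeg w + 1 := by rw [d'_w, hd_ot_eq w hwu]
  have LemStart : ∀ x y : V, o'.dir x y = true → ¬ o.dir x y = true →
      Relation.ReflTransGen (fun a b => o.dir a b = true) x w := by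
    intro x y hd' hno
    rw [ho'd] at hd'
    by_cases hcond : (x, y) ∈ (u :: c :: T').zip (u :: c :: T').tail ∨
        (y, x) ∈ (u :: c :: T').zip (u :: c :: T').tail
    · rw [if_pos hcond] at hd'
      rcases hcond with hxy | hyx
      · exact absurd hd' (hxo x y (aux_chain_of_zip hPch hxy))
      · exact F3 x (aux_zip_mem_right hyx)
    · rw [if_neg hcond] at hd'
      rcases (hot x y).mp hd' with h | ⟨rfl, rfl⟩
      · exact absurd h hno
      · exact hRuw (fun e => hcond (Or.inl (e ▸ pair0)))
  have LemEnd : ∀ x y : V, o'.dir x y = true → ¬ o.dir x y = true →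
      ∃ s, o.outDeg w + 1 ≤ o.outDeg s ∧
        Relation.ReflTransGen (fun a b => o.dir a b = true) s y := by
    intro x y hd' hno
    rw [ho'd] at hd'
    by_cases hcond : (x, y) ∈ (u :: c :: T').zip (u :: c :: T').tail ∨
        (y, x) ∈ (u :: c :: T').zip (u :: c :: T').tail
    · rw [if_pos hcond] at hd'
      rcases hcond with hxy | hyx
      · exact absurd hd' (hxo x y (aux_chain_of_zip hPch hxy))
      · exact RkP y (aux_zip_mem_left hyx)
    · rw [if_neg hcond] at hd'
      rcases (hot x y).mp hd' with h | ⟨rfl, h2⟩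
      · exact absurd h hno
      · rw [h2]
        exact ⟨v, hkv, Relation.ReflTransGen.refl⟩
  intro Q a b hQ
  by_contra hcon
  push_neg at hcon
  obtain ⟨⟨hQnd, hQlen, hQch⟩, hQh, hQl⟩ := hQ
  have hab : a ≠ b := aux_head_ne_last hQnd hQlen hQh hQl
  have ddge : ∀ x, o.outDeg x ≤ o'.outDeg x := by
    intro x
    by_cases hxw : x = w
    · rw [hxw, dW]; omega
    · rw [dd x hxw]
  rcases aux_scan1 (D0 := o.dir) hQch hQh hQl with hL | ⟨x, y, hsp, hrw⟩
  · by_cases hbw : b = w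
    · subst hbw
      have h1 : o'.outDeg a = o.outDeg a := dd a hab
      have h2 := Wup a hL
      rw [dW, h1] at hcon
      omega
    · by_cases haw : a = w
      · subst haw
        obtain ⟨s, hs, hsw⟩ := RkP a (List.mem_cons_of_mem _ hwT)
        have hkb := Rkd b ⟨s, hs, hsw.trans hL⟩
        rw [dW, dd b hbw] at hcon
        omega
      · have h1 := aux_key o hinv hL hab
        rw [dd a haw, dd b hbw] at hcon
        omega
  · have hxw2 := LemStart x y hsp.1 hsp.2
    have haww := hrw.trans hxw2
    have hda : o.outDeg a ≤ o.outDeg w + 1 := Wup a haww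
    have hd'a : o'.outDeg a ≤ o.outDeg w + 1 := by
      by_cases haw2 : a = w
      · rw [haw2, dW]
      · rw [dd a haw2]; exact hda
    rcases aux_scan2 (D0 := o.dir) hQch hQh hQl with hL | ⟨x2, y2, hsp2, hrw2⟩
    · by_cases hbw : b = w
      · rw [hbw, dW] at hcon
        omega
      · by_cases haw2 : a = w
        · subst haw2
          obtain ⟨s, hs, hsw⟩ := RkP a (List.mem_cons_of_mem _ hwT)
          have hkb := Rkd b ⟨s, hs, hsw.trans hL⟩
          rw [dW, dd b hbw] at hcon
          omega
        · have h1 := aux_key o hinv hL hab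
          rw [dd a haw2, dd b hbw] at hcon
          omega
    · obtain ⟨s, hs, hsy⟩ := LemEnd x2 y2 hsp2.1 hsp2.2
      have hkb := Rkd b ⟨s, hs, hsy.trans hrw2⟩
      have hby := ddge b
      omega
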